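/- Let (Ω₁,𝓕₁) and (Ω₂,𝓕₂) be standard Borel spaces, P a probability measure on Ω₁, and f : Ω₂ → Ω₁ a Borel measurable surjection. Then there exists a measurable map g : Ω₁ → Ω₂, defined P-almost everywhere, such that f(g(ω)) = ω for P-a.e. ω ∈ Ω₁. -/

import Mathlib

open MeasureTheory Set Filter Topology ENNReal NNReal

namespace MeasSelAux

/-- The set of sequences agreeing with `u` below `k`. -/
def cylSet (u : ℕ → ℕ) (k : ℕ) : Set (ℕ → ℕ) := {x | ∀ i, i < k → x i = u i}

/-- extension map whose range is `cylSet u k`. -/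
def extMap (u : ℕ → ℕ) (k : ℕ) : (ℕ → ℕ) → ℕ → ℕ :=
  fun x i => if i < k then u i else x (i - k)

lemma continuous_extMap (u : ℕ → ℕ) (k : ℕ) : Continuous (extMap u k) := by
  refine continuous_pi fun i => ?_
  by_cases h : i < k
  · simp only [extMap, if_pos h]; exact continuous_const
  · simp only [extMap, if_neg h]; exact continuous_apply _

lemma range_extMap (u : ℕ → ℕ) (k : ℕ) : range (extMap u k) = cylSet u k := by
  ext y
  constructor
  · rintro ⟨x, rfl⟩ i hi
    simp [extMap, hi]
  · intro hy
    refine ⟨fun j => y (j + k), funext fun i => ?_⟩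
    by_cases h : i < k
    · simp [extMap, h, hy i h]
    · simp only [extMap, if_neg h]
      congr 1
      omega

variable {Ω : Type*} [TopologicalSpace Ω] [PolishSpace Ω] [MeasurableSpace Ω] [BorelSpace Ω]

/-- Inner approximation of the range of a continuous map from Baire space by compact sets. -/
lemma exists_compact_le (μ : Measure Ω) [IsFiniteMeasure μ]
    (G : (ℕ → ℕ) → Ω) (hG : Continuous G) {ε : ℝ≥0∞} (hε : ε ≠ 0) :
    ∃ C, IsCompact C ∧ C ⊆ range G ∧ μ (range G) ≤ μ C + ε := by
  classical
  obtain ⟨δ, δpos, hδ⟩ := ENNReal.exists_pos_sum_of_countable hε ℕ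
  -- one-step extension
  have key : ∀ (n : ℕ → ℕ) (k : ℕ) (e : ℝ≥0∞), e ≠ 0 →
      ∃ m : ℕ, μ (G '' {x | ∀ i, i < k → x i ≤ n i}) ≤
        μ (G '' {x | (∀ i, i < k → x i ≤ n i) ∧ x k ≤ m}) + e := by
    intro n k e he
    set A : Set (ℕ → ℕ) := {x | ∀ i, i < k → x i ≤ n i} with hA
    set T : ℕ → Set (ℕ → ℕ) := fun m => {x | (∀ i, i < k → x i ≤ n i) ∧ x k ≤ m} with hT
    have hmono : Monotone fun m => G '' T m := by
      intro a b hab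
      apply image_mono
      exact fun x hx => ⟨hx.1, hx.2.trans hab⟩
    have hunion : (⋃ m, T m) = A := by
      ext x
      simp only [mem_iUnion, hT, hA, mem_setOf_eq]
      exact ⟨fun ⟨m, hm⟩ => hm.1, fun hx => ⟨x k, hx, le_rfl⟩⟩
    have hsup : μ (G '' A) = ⨆ m, μ (G '' T m) := by
      rw [← hunion, image_iUnion]
      exact hmono.measure_iUnion
    by_cases hle : μ (G '' A) ≤ e
    · exact ⟨0, hle.trans le_add_self⟩
    · push_neg at hle
      have hne : μ (G '' A) ≠ ⊤ := measure_ne_top μ _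
      have hlt : μ (G '' A) - e < μ (G '' A) :=
        ENNReal.sub_lt_self hne ((zero_le (a := e)).trans_lt hle).ne' he
      obtain ⟨m, hm⟩ := lt_iSup_iff.mp (hlt.trans_le hsup.le)
      exact ⟨m, tsub_le_iff_right.mp hm.le⟩
  choose stepc hstepc using key
  -- recursive construction of bounds
  set Pf : ℕ → ℕ → ℕ := fun k => Nat.rec (fun _ => 0)
    (fun k Pk => Function.update Pk k (stepc Pk k (δ (k + 1))
      (by exact_mod_cast (δpos (k + 1)).ne'))) k with hPf
  have hPsucc : ∀ k, Pf (k + 1) = Function.update (Pf k) k (stepc (Pf k) k (δ (k + 1))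
      (by exact_mod_cast (δpos (k + 1)).ne')) := fun k => rfl
  set N : ℕ → ℕ := fun i => Pf (i + 1) i with hN
  have hstab : ∀ k i, i < k → Pf k i = N i := by
    intro k
    induction k with
    | zero => intro i hi; omega
    | succ k ih =>
      intro i hi
      rcases Nat.lt_succ_iff_lt_or_eq.mp hi with h | rfl
      · rw [hPsucc k, Function.update_of_ne (by omega)]
        exact ih i h
      · rfl
  have hNval : ∀ k, N k = stepc (Pf k) k (δ (k + 1)) (by exact_mod_cast (δpos (k + 1)).ne') := by
    intro k
    show Pf (k + 1) k = _
    rw [hPsucc k, Function.update_self]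
  set S : ℕ → Set (ℕ → ℕ) := fun k => {x | ∀ i, i < k → x i ≤ N i} with hS
  have hSP : ∀ k, S k = {x | ∀ i, i < k → x i ≤ Pf k i} := by
    intro k
    ext x
    simp only [hS, mem_setOf_eq]
    exact ⟨fun h i hi => (hstab k i hi).symm ▸ h i hi, fun h i hi => (hstab k i hi) ▸ h i hi⟩
  have hSsucc : ∀ k, S (k + 1) =
      {x | (∀ i, i < k → x i ≤ Pf k i) ∧ x k ≤ stepc (Pf k) k (δ (k + 1))
        (by exact_mod_cast (δpos (k + 1)).ne')} := by
    intro k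
    ext x
    simp only [hS, mem_setOf_eq]
    constructor
    · intro h
      refine ⟨fun i hi => (hstab k i hi).symm ▸ h i (by omega), ?_⟩
      have hthis : x k ≤ N k := h k (by omega)
      rwa [hNval k] at hthis
    · rintro ⟨h1, h2⟩ i hi
      rcases Nat.lt_succ_iff_lt_or_eq.mp hi with h | rfl
      · rw [← hstab k i h]; exact h1 i h
      · rw [hNval i]; exact h2
  have hInv : ∀ k, μ (range G) ≤ μ (G '' S k) + ∑ i ∈ Finset.range k, (δ (i + 1) : ℝ≥0∞) := by
    intro k
    induction k with
    | zero =>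
      have : S 0 = univ := by ext x; simp [hS]
      simp [this, image_univ]
    | succ k ih =>
      have hstep := hstepc (Pf k) k (δ (k + 1)) (by exact_mod_cast (δpos (k + 1)).ne')
      rw [← hSP k, ← hSsucc k] at hstep
      calc μ (range G) ≤ μ (G '' S k) + ∑ i ∈ Finset.range k, (δ (i + 1) : ℝ≥0∞) := ih
        _ ≤ (μ (G '' S (k + 1)) + δ (k + 1)) + ∑ i ∈ Finset.range k, (δ (i + 1) : ℝ≥0∞) :=
            add_le_add_left hstep _
        _ = μ (G '' S (k + 1)) + ∑ i ∈ Finset.range (k + 1), (δ (i + 1) : ℝ≥0∞) := by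
            rw [Finset.sum_range_succ]; ring
  -- the compact set
  set K : Set (ℕ → ℕ) := {x | ∀ i, x i ≤ N i} with hK
  have hKcomp : IsCompact K := by
    have : K = Set.pi univ fun i => Iic (N i) := by
      ext x; simp [hK, Set.pi, Iic]
    rw [this]
    exact isCompact_univ_pi fun i => (Set.finite_Iic _).isCompact
  -- key compactness claim
  have key2 : ∀ U : Set Ω, IsOpen U → G '' K ⊆ U → ∃ k, G '' S k ⊆ U := by
    intro U hU hKU
    by_contra hcon
    push_neg at hcon
    have h' : ∀ k, ∃ x, x ∈ S k ∧ G x ∉ U := by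
      intro k
      obtain ⟨ω, hω, hωU⟩ := not_subset.mp (hcon k)
      obtain ⟨x, hx, rfl⟩ := hω
      exact ⟨x, hx, hωU⟩
    choose x hxS hxU using h'
    set y : ℕ → ℕ → ℕ := fun k i => min (x k i) (N i) with hy
    have hyK : ∀ k, y k ∈ K := fun k i => min_le_right _ _
    have hmapK : Filter.map y atTop ≤ 𝓟 K :=
      le_principal_iff.mpr (mem_map.mpr (Eventually.of_forall hyK))
    obtain ⟨z, hzK, hz⟩ := hKcomp.exists_clusterPt hmapK
    have hzc : MapClusterPt z atTop y := hz
    have hz' : MapClusterPt z atTop x := by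
      rw [mapClusterPt_iff_frequently]
      intro s hs
      rw [nhds_pi] at hs
      obtain ⟨I, t, htI, hsub⟩ := mem_pi'.mp hs
      have hW : Set.pi ↑I t ∈ 𝓝 z := by
        rw [nhds_pi]
        exact Filter.mem_pi'.mpr ⟨I, t, htI, subset_rfl⟩
      have hyW : ∃ᶠ k in atTop, y k ∈ Set.pi ↑I t := (mapClusterPt_iff_frequently.mp hzc) _ hW
      have hfreq := hyW.and_eventually (eventually_ge_atTop ((I.sup id) + 1))
      refine hfreq.mono ?_
      rintro k ⟨hk1, hk2⟩
      apply hsub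
      intro i hi
      have hiM : i < k := by
        have : i ≤ I.sup id := Finset.le_sup (f := id) hi
        omega
      have hxi : x k i ≤ N i := hxS k i hiM
      have : y k i = x k i := min_eq_left hxi
      rw [← this]
      exact hk1 i hi
    have hzU : G z ∈ U := hKU ⟨z, hzK, rfl⟩
    have hfreq : ∃ᶠ k in atTop, x k ∈ G ⁻¹' U :=
      (mapClusterPt_iff_frequently.mp hz') _ ((hU.preimage hG).mem_nhds hzU)
    obtain ⟨k, hk⟩ := hfreq.exists
    exact hxU k hk
  -- outer regularity
  have hGK : IsCompact (G '' K) := hKcomp.image hG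
  have hδ0 : (δ 0 : ℝ≥0∞) ≠ 0 := by exact_mod_cast (δpos 0).ne'
  obtain ⟨U, hGKU, hUopen, hUlt⟩ := Set.exists_isOpen_lt_of_lt (G '' K) (μ (G '' K) + δ 0)
    (ENNReal.lt_add_right (measure_ne_top μ _) hδ0)
  obtain ⟨k, hk⟩ := key2 U hUopen hGKU
  refine ⟨G '' K, hGK, image_subset_range _ _, ?_⟩
  calc μ (range G) ≤ μ (G '' S k) + ∑ i ∈ Finset.range k, (δ (i + 1) : ℝ≥0∞) := hInv k
    _ ≤ μ U + ∑ i ∈ Finset.range k, (δ (i + 1) : ℝ≥0∞) :=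
        add_le_add_left (measure_mono hk) _
    _ ≤ (μ (G '' K) + δ 0) + ∑ i ∈ Finset.range k, (δ (i + 1) : ℝ≥0∞) :=
        add_le_add_left hUlt.le _
    _ = μ (G '' K) + ∑ i ∈ Finset.range (k + 1), (δ i : ℝ≥0∞) := by
        rw [Finset.sum_range_succ']; ring
    _ ≤ μ (G '' K) + ∑' i, (δ i : ℝ≥0∞) :=
        add_le_add_right (ENNReal.sum_le_tsum _) _
    _ ≤ μ (G '' K) + ε := add_le_add_right hδ.le _

/-- The range of a continuous map from Baire space is null measurable (universal measurability
of analytic sets, for a fixed finite measure). -/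
lemma nullMeasurableSet_range (μ : Measure Ω) [IsFiniteMeasure μ]
    (G : (ℕ → ℕ) → Ω) (hG : Continuous G) : NullMeasurableSet (range G) μ := by
  have h : ∀ m : ℕ, ∃ C, IsCompact C ∧ C ⊆ range G ∧
      μ (range G) ≤ μ C + ((m : ℝ≥0∞) + 1)⁻¹ := by
    intro m
    exact exists_compact_le μ G hG (by simp)
  choose C hC hCsub hCle using h
  set B := ⋃ m, C m with hB
  have hBmeas : MeasurableSet B := MeasurableSet.iUnion fun m => (hC m).isClosed.measurableSet
  have hBsub : B ⊆ range G := iUnion_subset hCsub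
  have hle : μ (range G) ≤ μ B := by
    refine ENNReal.le_of_forall_pos_le_add fun ε' hε' _ => ?_
    obtain ⟨m, hm⟩ := ENNReal.exists_inv_nat_lt (by exact_mod_cast hε'.ne' : (ε' : ℝ≥0∞) ≠ 0)
    have h1 : ((m : ℝ≥0∞) + 1)⁻¹ ≤ (ε' : ℝ≥0∞) := by
      refine le_trans ?_ hm.le
      exact ENNReal.inv_le_inv.mpr (by simp)
    calc μ (range G) ≤ μ (C m) + ((m : ℝ≥0∞) + 1)⁻¹ := hCle m
      _ ≤ μ B + ε' := add_le_add (measure_mono (subset_iUnion C m)) h1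
  have h0 : μ (range G \ B) = 0 := by
    have hsub : range G \ B ⊆ toMeasurable μ (range G) \ B :=
      diff_subset_diff_left (subset_toMeasurable _ _)
    refine measure_mono_null hsub ?_
    have hBH : B ⊆ toMeasurable μ (range G) := hBsub.trans (subset_toMeasurable _ _)
    rw [measure_diff hBH hBmeas.nullMeasurableSet (measure_ne_top μ B)]
    rw [measure_toMeasurable]
    exact tsub_eq_zero_of_le hle
  have hdecomp : range G = B ∪ (range G \ B) := (union_diff_cancel hBsub).symm
  rw [hdecomp]
  exact hBmeas.nullMeasurableSet.union (NullMeasurableSet.of_null h0)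

/-- Images of cylinders under continuous maps from Baire space are null measurable. -/
lemma nullMeasurableSet_image_cylSet (μ : Measure Ω) [IsFiniteMeasure μ]
    (F : (ℕ → ℕ) → Ω) (hF : Continuous F) (u : ℕ → ℕ) (k : ℕ) :
    NullMeasurableSet (F '' cylSet u k) μ := by
  have h : F '' cylSet u k = range (F ∘ extMap u k) := by
    rw [range_comp, range_extMap]
  rw [h]
  exact nullMeasurableSet_range μ _ (hF.comp (continuous_extMap u k))

/-- Leftmost-branch selector for a continuous surjection from Baire space. -/
lemma exists_aemeasurable_selector (μ : Measure Ω) [IsFiniteMeasure μ]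
    (F : (ℕ → ℕ) → Ω) (hF : Continuous F) (hFs : Function.Surjective F) :
    ∃ ℓ : Ω → ℕ → ℕ, AEMeasurable ℓ μ ∧ ∀ ω, F (ℓ ω) = ω := by
  classical
  set fib : Ω → Set (ℕ → ℕ) := fun ω => F ⁻¹' {ω} with hfib
  set nxt : Ω → (ℕ → ℕ) → ℕ → ℕ := fun ω u k =>
    if h : ∃ n, (fib ω ∩ cylSet (Function.update u k n) (k + 1)).Nonempty then Nat.find h else 0
    with hnxt
  set D : Ω → ℕ → ℕ → ℕ := fun ω k => Nat.rec (fun _ => 0)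
    (fun k Dk => Function.update Dk k (nxt ω Dk k)) k with hD
  have hDsucc : ∀ ω k, D ω (k + 1) = Function.update (D ω k) k (nxt ω (D ω k) k) :=
    fun ω k => rfl
  set l : Ω → ℕ → ℕ := fun ω i => D ω (i + 1) i with hl
  have hstab : ∀ ω k i, i < k → D ω k i = l ω i := by
    intro ω k
    induction k with
    | zero => intro i hi; omega
    | succ k ih =>
      intro i hi
      rcases Nat.lt_succ_iff_lt_or_eq.mp hi with h | rfl
      · rw [hDsucc ω k, Function.update_of_ne (by omega)]
        exact ih i h
      · rfl
  have hval : ∀ ω k, l ω k = nxt ω (D ω k) k := by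
    intro ω k
    show D ω (k + 1) k = _
    rw [hDsucc ω k, Function.update_self]
  have hcylupdate : ∀ (v v' : ℕ → ℕ) k, (∀ i, i < k → v i = v' i) → ∀ n,
      cylSet (Function.update v k n) (k + 1) = cylSet (Function.update v' k n) (k + 1) := by
    intro v v' k hvv n
    have heq : ∀ i, i < k + 1 → Function.update v k n i = Function.update v' k n i := by
      intro i hi
      rcases Nat.lt_succ_iff_lt_or_eq.mp hi with h | rfl
      · rw [Function.update_of_ne (by omega), Function.update_of_ne (by omega)]
        exact hvv i h
      · simp
    ext x
    simp only [cylSet, mem_setOf_eq]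
    exact ⟨fun h i hi => (heq i hi) ▸ h i hi, fun h i hi => (heq i hi).symm ▸ h i hi⟩
  have hnxtcongr : ∀ ω (v v' : ℕ → ℕ) k, (∀ i, i < k → v i = v' i) →
      nxt ω v k = nxt ω v' k := by
    intro ω v v' k hvv
    simp only [hnxt]
    simp_rw [hcylupdate v v' k hvv]
  have hInv : ∀ ω k, (fib ω ∩ cylSet (l ω) k).Nonempty := by
    intro ω k
    induction k with
    | zero =>
      obtain ⟨x, hx⟩ := hFs ω
      exact ⟨x, by simp [hfib, hx], fun i hi => by omega⟩
    | succ k ih =>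
      obtain ⟨x, hxf, hxc⟩ := ih
      have hex : ∃ n, (fib ω ∩ cylSet (Function.update (D ω k) k n) (k + 1)).Nonempty := by
        refine ⟨x k, x, hxf, ?_⟩
        intro i hi
        rcases Nat.lt_succ_iff_lt_or_eq.mp hi with h | rfl
        · rw [Function.update_of_ne (by omega), hstab ω k i h]
          exact hxc i h
        · rw [Function.update_self]
      have hnval : nxt ω (D ω k) k = Nat.find hex := by simp only [hnxt, dif_pos hex]
      obtain ⟨y, hyf, hyc⟩ := Nat.find_spec hex
      refine ⟨y, hyf, ?_⟩
      intro i hi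
      have hyi := hyc i hi
      rcases Nat.lt_succ_iff_lt_or_eq.mp hi with h | rfl
      · rw [Function.update_of_ne (by omega)] at hyi
        rw [hyi, hstab ω k i h]
      · rw [Function.update_self] at hyi
        rw [hyi, hval, hnval]
  have hsel : ∀ ω, F (l ω) = ω := by
    intro ω
    have hclosed : IsClosed (fib ω) := isClosed_singleton.preimage hF
    have hmem : l ω ∈ fib ω := by
      have hcl : l ω ∈ closure (fib ω) := by
        rw [mem_closure_iff_nhds]
        intro s hs
        rw [nhds_pi] at hs
        obtain ⟨I, t, htI, hsub⟩ := mem_pi'.mp hs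
        obtain ⟨x, hxf, hxc⟩ := hInv ω ((I.sup id) + 1)
        refine ⟨x, hsub ?_, hxf⟩
        intro i hi
        have hiM : i < I.sup id + 1 := by
          have := Finset.le_sup (f := id) hi; simp only [id] at this; omega
        rw [hxc i hiM]
        exact mem_of_mem_nhds (htI i)
      rwa [hclosed.closure_eq] at hcl
    simpa [hfib] using hmem
  -- measurability
  have hA : ∀ (v : ℕ → ℕ) k n,
      {ω | (fib ω ∩ cylSet (Function.update v k n) (k + 1)).Nonempty}
        = F '' cylSet (Function.update v k n) (k + 1) := by
    intro v k n
    ext ω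
    simp only [mem_setOf_eq, mem_image]
    constructor
    · rintro ⟨x, hxf, hxc⟩
      exact ⟨x, hxc, by simpa [hfib] using hxf⟩
    · rintro ⟨x, hxc, hxω⟩
      exact ⟨x, by simp [hfib, hxω], hxc⟩
  have hAnm : ∀ (v : ℕ → ℕ) k n, NullMeasurableSet
      {ω | (fib ω ∩ cylSet (Function.update v k n) (k + 1)).Nonempty} μ := by
    intro v k n
    rw [hA]
    exact nullMeasurableSet_image_cylSet μ F hF _ _
  have hnxtnm : ∀ (v : ℕ → ℕ) k n, NullMeasurableSet {ω | nxt ω v k = n} μ := by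
    intro v k n
    rcases Nat.eq_zero_or_pos n with rfl | hn
    · have hrep : {ω | nxt ω v k = 0} =
          {ω | (fib ω ∩ cylSet (Function.update v k 0) (k + 1)).Nonempty}
            ∪ ⋂ m, {ω | (fib ω ∩ cylSet (Function.update v k m) (k + 1)).Nonempty}ᶜ := by
        ext ω
        simp only [mem_setOf_eq, mem_union, mem_iInter, mem_compl_iff, hnxt]
        constructor
        · intro h
          by_cases hex : ∃ m, (fib ω ∩ cylSet (Function.update v k m) (k + 1)).Nonempty
          · left
            rw [dif_pos hex] at h
            have := Nat.find_spec hex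
            rwa [h] at this
          · right
            exact fun m hc => hex ⟨m, hc⟩
        · intro h
          rcases h with h | h
          · have hex : ∃ m, (fib ω ∩ cylSet (Function.update v k m) (k + 1)).Nonempty := ⟨0, h⟩
            rw [dif_pos hex]
            exact Nat.le_zero.mp (Nat.find_le h)
          · rw [dif_neg (fun ⟨m, hm⟩ => (h m) hm)]
      rw [hrep]
      exact (hAnm v k 0).union (NullMeasurableSet.iInter fun m => (hAnm v k m).compl)
    · have hrep : {ω | nxt ω v k = n} =
          {ω | (fib ω ∩ cylSet (Function.update v k n) (k + 1)).Nonempty}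
            ∩ ⋂ m ∈ Finset.range n,
              {ω | (fib ω ∩ cylSet (Function.update v k m) (k + 1)).Nonempty}ᶜ := by
        ext ω
        simp only [mem_setOf_eq, mem_inter_iff, mem_iInter, mem_compl_iff, Finset.mem_range, hnxt]
        constructor
        · intro h
          by_cases hex : ∃ m, (fib ω ∩ cylSet (Function.update v k m) (k + 1)).Nonempty
          · rw [dif_pos hex] at h
            subst h
            exact ⟨Nat.find_spec hex, fun m hm => Nat.find_min hex hm⟩
          · rw [dif_neg hex] at h
            omega
        · rintro ⟨h1, h2⟩
          have hex : ∃ m, (fib ω ∩ cylSet (Function.update v k m) (k + 1)).Nonempty := ⟨n, h1⟩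
          rw [dif_pos hex]
          have h3 : Nat.find hex ≤ n := Nat.find_le h1
          rcases lt_or_eq_of_le h3 with h4 | h4
          · exact absurd (Nat.find_spec hex) (h2 _ h4)
          · exact h4
      rw [hrep]
      exact (hAnm v k n).inter (NullMeasurableSet.iInter fun m =>
        NullMeasurableSet.iInter fun _ => (hAnm v k m).compl)
  have hE : ∀ k, ∀ u : ℕ → ℕ, NullMeasurableSet {ω | ∀ i, i < k → l ω i = u i} μ := by
    intro k
    induction k with
    | zero =>
      intro u
      have : {ω | ∀ i, i < 0 → l ω i = u i} = univ := by ext ω; simp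
      rw [this]
      exact MeasurableSet.univ.nullMeasurableSet
    | succ k ih =>
      intro u
      have hdecomp : {ω | ∀ i, i < k + 1 → l ω i = u i} =
          {ω | ∀ i, i < k → l ω i = u i} ∩ {ω | nxt ω u k = u k} := by
        ext ω
        simp only [mem_setOf_eq, mem_inter_iff]
        constructor
        · intro h
          refine ⟨fun i hi => h i (by omega), ?_⟩
          have h2 : nxt ω u k = nxt ω (D ω k) k :=
            hnxtcongr ω u (D ω k) k fun i hi => by rw [hstab ω k i hi, h i (by omega)]
          rw [h2, ← hval ω k]
          exact h k (by omega)
        · rintro ⟨h1, h2⟩ i hi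
          rcases Nat.lt_succ_iff_lt_or_eq.mp hi with h | rfl
          · exact h1 i h
          · have h3 : nxt ω u i = nxt ω (D ω i) i :=
              hnxtcongr ω u (D ω i) i fun j hj => by rw [hstab ω i j hj, h1 j hj]
            rw [hval ω i, ← h3, h2]
      rw [hdecomp]
      exact (ih u).inter (hnxtnm u k (u k))
  have hcoordset : ∀ i n, NullMeasurableSet {ω | l ω i = n} μ := by
    intro i n
    set ext2 : (Fin i → ℕ) → ℕ → ℕ := fun g j => if h : j < i then g ⟨j, h⟩ else 0 with hext2
    have hrep : {ω | l ω i = n} = ⋃ g : Fin i → ℕ,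
        ({ω | ∀ j, j < i → l ω j = ext2 g j} ∩ {ω | nxt ω (ext2 g) i = n}) := by
      ext ω
      simp only [mem_setOf_eq, mem_iUnion, mem_inter_iff]
      constructor
      · intro h
        refine ⟨fun j => l ω j, fun j hj => by simp [hext2, hj], ?_⟩
        have h3 : nxt ω (ext2 fun j => l ω j) i = nxt ω (D ω i) i :=
          hnxtcongr ω _ (D ω i) i fun j hj => by
            simp [hext2, hj, hstab ω i j hj]
        rw [h3, ← hval ω i]
        exact h
      · rintro ⟨g, h1, h2⟩
        have h3 : nxt ω (ext2 g) i = nxt ω (D ω i) i :=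
          hnxtcongr ω _ (D ω i) i fun j hj => by rw [hstab ω i j hj, h1 j hj]
        rw [h3, ← hval ω i] at h2
        exact h2
    rw [hrep]
    exact NullMeasurableSet.iUnion fun g => (hE i (ext2 g)).inter
      (hnxtnm (ext2 g) i n)
  have hcoord : ∀ i, NullMeasurable (fun ω => l ω i) μ := by
    intro i s _
    have : (fun ω => l ω i) ⁻¹' s = ⋃ n ∈ s, {ω | l ω i = n} := by
      ext ω; simp [eq_comm]
    rw [this]
    exact NullMeasurableSet.biUnion (to_countable s) fun n _ => hcoordset i n
  have hnm : NullMeasurable l μ := by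
    have hm : @Measurable (NullMeasurableSpace Ω μ) (ℕ → ℕ) _ _ l :=
      measurable_pi_iff.mpr fun i => (hcoord i).measurable'
    exact hm
  exact ⟨l, hnm.aemeasurable, hsel⟩

end MeasSelAux

/-- Measurable selector theorem: if `f : Ω₂ → Ω₁` is a Borel measurable surjection
between standard Borel spaces and `P` is a probability measure on `Ω₁`, then there
is a measurable map `g : Ω₁ → Ω₂` with `f (g ω) = ω` for `P`-a.e. `ω`. -/
theorem measurable_selector {Ω₁ Ω₂ : Type*}
    [MeasurableSpace Ω₁] [StandardBorelSpace Ω₁]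
    [MeasurableSpace Ω₂] [StandardBorelSpace Ω₂]
    (P : Measure Ω₁) [IsProbabilityMeasure P]
    (f : Ω₂ → Ω₁) (hf : Measurable f) (hsurj : Function.Surjective f) :
    ∃ g : Ω₁ → Ω₂, Measurable g ∧ ∀ᵐ ω ∂P, f (g ω) = ω := by
  have hne1 : Nonempty Ω₁ := by
    rcases isEmpty_or_nonempty Ω₁ with h | h
    · exfalso
      have h1 : P Set.univ = 1 := measure_univ
      rw [Set.univ_eq_empty_iff.mpr h] at h1
      simp at h1
    · exact h
  have hne2 : Nonempty Ω₂ := ⟨(hsurj (Classical.arbitrary Ω₁)).choose⟩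
  letI τ₁ := upgradeStandardBorel Ω₁
  letI τ₂ := upgradeStandardBorel Ω₂
  obtain ⟨t', ht'le, hfc, ht'polish⟩ := hf.exists_continuous
  obtain ⟨σf, hσc, hσs⟩ := @PolishSpace.exists_nat_nat_continuous_surjective Ω₂ t' ht'polish hne2
  have hσm : Measurable σf := by
    have h1 : @Measurable (ℕ → ℕ) Ω₂ _ (@borel Ω₂ t') σf := by
      have he : (MeasurableSpace.pi : MeasurableSpace (ℕ → ℕ)) = borel (ℕ → ℕ) :=
        BorelSpace.measurable_eq
      rw [he]
      exact @Continuous.borel_measurable (ℕ → ℕ) Ω₂ _ t' σf hσc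
    have h2 : (‹MeasurableSpace Ω₂› : MeasurableSpace Ω₂) ≤ @borel Ω₂ t' := by
      rw [eq_borel_upgradeStandardBorel Ω₂]
      exact borel_anti ht'le
    exact h1.mono le_rfl h2
  set F : (ℕ → ℕ) → Ω₁ := f ∘ σf with hFdef
  have hFc : Continuous F :=
    @Continuous.comp (ℕ → ℕ) Ω₂ Ω₁ _ t' _ σf f hfc hσc
  have hFs : Function.Surjective F := hsurj.comp hσs
  obtain ⟨l, hl, hlsel⟩ := MeasSelAux.exists_aemeasurable_selector P F hFc hFs
  have hcomp : AEMeasurable (σf ∘ l) P := hσm.comp_aemeasurable hl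
  refine ⟨hcomp.mk _, hcomp.measurable_mk, ?_⟩
  filter_upwards [hcomp.ae_eq_mk] with ω hω
  rw [← hω]
  exact hlsel ω
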